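/- arXiv:2411.04248 — 2 statements merged into one kernel-verified Lean document; each statement's English description precedes it below -/
import Mathlib

section
/- Let a_{n,m} be complex numbers for 1 ≤ n,m ≤ N. Then for every ε > 0, the L^4 norm over [0,1]^2 of the exponential sum ∑_{n,m=1}^N a_{n,m} e(n²x + m²y) is bounded by C_ε N^ε (∑_{n,m} |a_{n,m}|²)^{1/2}, where e(z) = e^{2πiz}. -/
open MeasureTheory Complex

noncomputable def e (z : ℝ) : ℂ := Complex.exp (2 * Real.pi * Complex.I * z)

namespace Lambda4Aux
open Zsqrtd UniqueFactorizationMonoid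

local notation "ℤ[i]" => GaussianInt

noncomputable instance : NormalizationMonoid ℤ[i] :=
  (UniqueFactorizationMonoid.normalizationMonoid (α := ℤ[i])).toNormalizationMonoid

lemma unit_pos_eq (z w : ℤ[i]) (u : ℤ[i]ˣ) (hz1 : 1 ≤ z.re) (hz2 : 1 ≤ z.im)
    (hw1 : 1 ≤ w.re) (hw2 : 1 ≤ w.im) (h : z * (u : ℤ[i]) = w) : z = w := by
  have hu : IsUnit (u : ℤ[i]) := u.isUnit
  have hn : ((u : ℤ[i])).norm = 1 := (Zsqrtd.norm_eq_one_iff' (by norm_num) _).mpr hu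
  have hn' : (u : ℤ[i]).re * (u : ℤ[i]).re + (u : ℤ[i]).im * (u : ℤ[i]).im = 1 := by
    have h2 := hn; rw [Zsqrtd.norm_def] at h2; linarith
  set a := (u : ℤ[i]).re with ha
  set b := (u : ℤ[i]).im with hb
  have hre : w.re = z.re * a - z.im * b := by
    rw [← h, Zsqrtd.re_mul]; try ring
  have him : w.im = z.re * b + z.im * a := by
    rw [← h, Zsqrtd.im_mul]; try ring
  have ha1 : -1 ≤ a := by nlinarith
  have ha2 : a ≤ 1 := by nlinarith
  have hb1 : -1 ≤ b := by nlinarith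
  have hb2 : b ≤ 1 := by nlinarith
  interval_cases a <;> interval_cases b <;>
    first
      | (exfalso; omega)
      | (exfalso; nlinarith)
      | (apply Zsqrtd.ext <;> omega)

/-- number of representations of k as ordered sums of two squares of 1..N -/
def repCard (N k : ℕ) : ℕ :=
  (Finset.univ.filter fun q : Fin N × Fin N =>
    ((q.1 : ℕ) + 1) ^ 2 + ((q.2 : ℕ) + 1) ^ 2 = k).card

lemma gz_norm (q : Fin N × Fin N) :
    (Zsqrtd.norm (⟨((q.1:ℕ):ℤ) + 1, ((q.2:ℕ):ℤ) + 1⟩ : ℤ[i]) : ℤ)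
      = (((q.1:ℕ) + 1) ^ 2 + ((q.2:ℕ) + 1) ^ 2 : ℕ) := by
  rw [Zsqrtd.norm_def]; push_cast; ring

lemma repCard_le_powerset (N k : ℕ) (hk : k ≠ 0) :
    repCard N k ≤ ((normalizedFactors ((k : ℕ) : ℤ[i])).powerset.toFinset).card := by
  have hkz : ((k : ℕ) : ℤ[i]) ≠ 0 := by
    simp only [Ne, ← Nat.cast_zero (R := ℤ[i])]
    exact_mod_cast fun h => hk (by exact_mod_cast h)
  classical
  apply Finset.card_le_card_of_injOn
    (fun q => normalizedFactors (⟨((q.1:ℕ):ℤ) + 1, ((q.2:ℕ):ℤ) + 1⟩ : ℤ[i]))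
  · intro q hq
    simp only [Finset.coe_filter, Finset.mem_filter, Finset.mem_univ, true_and, Set.mem_setOf_eq] at hq
    set z : ℤ[i] := ⟨((q.1:ℕ):ℤ) + 1, ((q.2:ℕ):ℤ) + 1⟩ with hzdef
    have hz0 : z ≠ 0 := by
      intro h
      have := congrArg Zsqrtd.re h
      simp [hzdef] at this
      omega
    have hdvd : z ∣ ((k : ℕ) : ℤ[i]) := by
      refine ⟨star z, ?_⟩
      have h1 : ((Zsqrtd.norm z : ℤ) : ℤ[i]) = z * star z := Zsqrtd.norm_eq_mul_conj z
      have h2 : Zsqrtd.norm z = (k : ℤ) := by rw [hzdef, gz_norm q, hq]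
      rw [← h1, h2]
      push_cast
      ring
    rw [Finset.mem_coe, Multiset.mem_toFinset, Multiset.mem_powerset]
    exact (dvd_iff_normalizedFactors_le_normalizedFactors hz0 hkz).mp hdvd
  · intro q hq q' hq' h
    simp only at h
    set z : ℤ[i] := ⟨((q.1:ℕ):ℤ) + 1, ((q.2:ℕ):ℤ) + 1⟩ with hzdef
    set z' : ℤ[i] := ⟨((q'.1:ℕ):ℤ) + 1, ((q'.2:ℕ):ℤ) + 1⟩ with hzdef'
    have hz0 : z ≠ 0 := by
      intro hcon; have := congrArg Zsqrtd.re hcon; simp [hzdef] at this; omega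
    have hz0' : z' ≠ 0 := by
      intro hcon; have := congrArg Zsqrtd.re hcon; simp [hzdef'] at this; omega
    have hassoc : Associated z z' := by
      apply associated_of_dvd_dvd
      · exact (dvd_iff_normalizedFactors_le_normalizedFactors hz0 hz0').mpr (le_of_eq h)
      · exact (dvd_iff_normalizedFactors_le_normalizedFactors hz0' hz0).mpr (le_of_eq h.symm)
    obtain ⟨u, hu⟩ := hassoc
    have hzz : z = z' := by
      apply unit_pos_eq z z' u <;> simp [hzdef, hzdef', hu] <;> omega
    have h1 : (q.1 : ℕ) = (q'.1 : ℕ) := by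
      have := congrArg Zsqrtd.re hzz; simp [hzdef, hzdef'] at this; omega
    have h2 : (q.2 : ℕ) = (q'.2 : ℕ) := by
      have := congrArg Zsqrtd.im hzz; simp [hzdef, hzdef'] at this; omega
    exact Prod.ext (Fin.ext h1) (Fin.ext h2)

lemma powerset_card_le {α : Type*} [DecidableEq α] (s : Multiset α) :
    s.powerset.toFinset.card ≤ ∏ x ∈ s.toFinset, (s.count x + 1) := by
  classical
  have h := Finset.card_le_card_of_injOn
    (s := s.powerset.toFinset)
    (f := fun (t : Multiset α) => fun (x : α) (_ : x ∈ s.toFinset) => t.count x)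
    (t := s.toFinset.pi fun x => Finset.range (s.count x + 1)) ?_ ?_
  · calc s.powerset.toFinset.card
        ≤ (s.toFinset.pi fun x => Finset.range (s.count x + 1)).card := h
      _ = ∏ x ∈ s.toFinset, (s.count x + 1) := by
          rw [Finset.card_pi]; exact Finset.prod_congr rfl fun x _ => Finset.card_range _
  · intro t ht
    rw [Finset.mem_coe, Multiset.mem_toFinset, Multiset.mem_powerset] at ht
    rw [Finset.mem_coe, Finset.mem_pi]
    intro x _
    rw [Finset.mem_range, Nat.lt_succ_iff]
    exact Multiset.count_le_of_le x ht
  · intro t ht t' ht' hfun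
    simp only [Finset.coe_insert, Set.mem_insert_iff, Finset.mem_coe,
      Multiset.mem_toFinset, Multiset.mem_powerset] at ht ht'
    ext x
    by_cases hx : x ∈ s.toFinset
    · exact congrFun (congrFun hfun x) hx
    · rw [Multiset.mem_toFinset] at hx
      have h0 : s.count x = 0 := Multiset.count_eq_zero_of_notMem hx
      have h1 : t.count x = 0 := Nat.le_zero.mp (h0 ▸ Multiset.count_le_of_le x ht)
      have h2 : t'.count x = 0 := Nat.le_zero.mp (h0 ▸ Multiset.count_le_of_le x ht')
      rw [h1, h2]

/-- Norm as a monoid hom to ℕ. -/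
def NmHom : ℤ[i] →* ℕ where
  toFun z := z.norm.natAbs
  map_one' := by simp [Zsqrtd.norm_one]
  map_mul' z w := by rw [Zsqrtd.norm_mul, Int.natAbs_mul]

lemma natCast_gi_ne (m : ℕ) (h : m ≠ 0) : ((m : ℕ) : ℤ[i]) ≠ 0 := by
  intro hc
  have := congrArg Zsqrtd.re hc
  simp only [Zsqrtd.re_natCast, Zsqrtd.re_zero] at this
  exact h (by exact_mod_cast this)

lemma NmHom_natCast (m : ℕ) : NmHom ((m : ℕ) : ℤ[i]) = m ^ 2 := by
  simp only [NmHom, MonoidHom.coe_mk, OneHom.coe_mk, Zsqrtd.norm_def]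
  simp [Zsqrtd.re_natCast, Zsqrtd.im_natCast]
  rw [← Int.natAbs_natCast (m^2)]
  congr 1
  push_cast
  ring

lemma two_le_Nm_of_prime {x : ℤ[i]} (hx : Prime x) : 2 ≤ NmHom x := by
  have h0 : NmHom x ≠ 0 := by
    simp only [NmHom, MonoidHom.coe_mk, OneHom.coe_mk]
    have := GaussianInt.norm_pos.mpr hx.ne_zero
    omega
  have h1 : NmHom x ≠ 1 := fun h => hx.not_unit (Zsqrtd.norm_eq_one_iff.mp h)
  omega

lemma dvd_Nm_cast (x : ℤ[i]) : x ∣ ((NmHom x : ℕ) : ℤ[i]) := by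
  refine ⟨star x, ?_⟩
  have h1 : ((Zsqrtd.norm x : ℤ) : ℤ[i]) = x * star x := Zsqrtd.norm_eq_mul_conj x
  rw [← h1]
  congr 1
  have : ((NmHom x : ℕ) : ℤ) = Zsqrtd.norm x := by
    simp only [NmHom, MonoidHom.coe_mk, OneHom.coe_mk]
    exact Int.natAbs_of_nonneg (GaussianInt.norm_nonneg x)
  exact_mod_cast congrArg (fun (j : ℤ) => ((j : ℤ) : ℤ[i])) this

lemma small_prime_mem (B : ℕ) (hB : 1 ≤ B) {x : ℤ[i]} {k : ℕ} (hk : k ≠ 0)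
    (hx : x ∈ (normalizedFactors ((k : ℕ) : ℤ[i])).toFinset) (hsmall : NmHom x ≤ B) :
    x ∈ (normalizedFactors ((B.factorial : ℕ) : ℤ[i])).toFinset := by
  rw [Multiset.mem_toFinset] at hx ⊢
  have hprime : Prime x := prime_of_normalized_factor x hx
  have hnorm : normalize x = x := normalize_normalized_factor x hx
  have hfact0 : ((B.factorial : ℕ) : ℤ[i]) ≠ 0 := natCast_gi_ne _ (Nat.factorial_ne_zero B)
  have hdvd : x ∣ ((B.factorial : ℕ) : ℤ[i]) := by
    refine dvd_trans (dvd_Nm_cast x) ?_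
    exact Nat.cast_dvd_cast (Nat.dvd_factorial (by have := two_le_Nm_of_prime hprime; omega) hsmall)
  have h1 : normalizedFactors x = {x} := by
    rw [normalizedFactors_irreducible hprime.irreducible, hnorm]
  have h2 : normalizedFactors x ≤ normalizedFactors ((B.factorial : ℕ) : ℤ[i]) :=
    (dvd_iff_normalizedFactors_le_normalizedFactors hprime.ne_zero hfact0).mp hdvd
  rw [h1] at h2
  exact Multiset.singleton_le.mp h2

lemma prod_Nm_pow_count {k : ℕ} (hk : k ≠ 0) :
    ∏ x ∈ (normalizedFactors ((k : ℕ) : ℤ[i])).toFinset,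
      NmHom x ^ (normalizedFactors ((k : ℕ) : ℤ[i])).count x = k ^ 2 := by
  classical
  set s := normalizedFactors ((k : ℕ) : ℤ[i]) with hs
  have h1 : ∏ x ∈ s.toFinset, NmHom x ^ s.count x = NmHom s.prod := by
    rw [Finset.prod_multiset_count (s := s)]
    rw [map_prod]
    exact Finset.prod_congr rfl fun x _ => (map_pow NmHom x _).symm
  rw [h1]
  obtain ⟨u, hu⟩ := prod_normalizedFactors (natCast_gi_ne k hk)
  have h2 : NmHom ((u : ℤ[i])) = 1 := Zsqrtd.norm_eq_one_iff.mpr u.isUnit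
  calc NmHom s.prod = NmHom s.prod * NmHom (u : ℤ[i]) := by rw [h2, mul_one]
    _ = NmHom (s.prod * (u : ℤ[i])) := (map_mul NmHom _ _).symm
    _ = NmHom ((k : ℕ) : ℤ[i]) := by rw [hu]
    _ = k ^ 2 := NmHom_natCast k

lemma small_factor_bound (ε : ℝ) (hε : 0 < ε) (c : ℕ) :
    ((c : ℝ) + 1) ≤ ((2:ℝ) ^ ε / (ε * Real.log 2)) * ((2:ℝ) ^ c) ^ ε := by
  have hlog : (0:ℝ) < Real.log 2 := Real.log_pos (by norm_num)
  set t : ℝ := ε * Real.log 2 with ht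
  have htpos : 0 < t := by positivity
  have h1 : ((2:ℝ) ^ c) ^ ε = Real.exp ((c : ℝ) * t) := by
    rw [Real.rpow_def_of_pos (by positivity), Real.log_pow]
    rw [ht]; ring_nf
  have h2 : (2:ℝ) ^ ε = Real.exp t := by
    rw [Real.rpow_def_of_pos (by norm_num), ht]
    ring_nf
  rw [h1, h2]
  rw [div_mul_eq_mul_div, le_div_iff₀ htpos, ← Real.exp_add]
  have h3 := Real.add_one_le_exp (t + (c:ℝ) * t)
  have h4 : ((c:ℝ) + 1) * t ≤ t + (c:ℝ) * t := le_of_eq (by ring)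
  nlinarith [Real.exp_pos (t + (c:ℝ) * t)]

lemma large_factor_bound (ε : ℝ) (hε : 0 < ε) (c v : ℕ) (hv : (2:ℝ) ^ (1/ε) ≤ (v:ℝ)) :
    ((c : ℝ) + 1) ≤ ((v:ℝ) ^ c) ^ ε := by
  have hbase : (0:ℝ) ≤ (2:ℝ) ^ (1/ε) := le_of_lt (Real.rpow_pos_of_pos (by norm_num) _)
  have h1 : (((2:ℝ) ^ (1/ε)) ^ c) ^ ε ≤ ((v:ℝ) ^ c) ^ ε := by
    apply Real.rpow_le_rpow (pow_nonneg hbase c)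
    · exact pow_le_pow_left₀ hbase hv c
    · exact le_of_lt hε
  refine le_trans ?_ h1
  have h2 : (((2:ℝ) ^ (1/ε)) ^ c) ^ ε = (2:ℝ) ^ c := by
    rw [← Real.rpow_natCast ((2:ℝ) ^ (1/ε)) c, ← Real.rpow_mul (by norm_num : (0:ℝ) ≤ 2),
      ← Real.rpow_mul (by norm_num : (0:ℝ) ≤ 2),
      show 1/ε * (c:ℝ) * ε = (c:ℝ) from by field_simp, Real.rpow_natCast]
  rw [h2]
  have := Nat.lt_two_pow_self (n := c)
  have : (c:ℝ) + 1 ≤ ((2^c : ℕ) : ℝ) := by exact_mod_cast this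
  simpa using this

lemma rep_bound (ε : ℝ) (hε : 0 < ε) :
    ∃ C > (0:ℝ), ∀ N k : ℕ, k ≠ 0 → (repCard N k : ℝ) ≤ C * (k:ℝ) ^ (2*ε) := by
  classical
  set B : ℕ := ⌈(2:ℝ) ^ (1/ε)⌉₊ with hB
  set C₀ : ℝ := max 1 ((2:ℝ) ^ ε / (ε * Real.log 2)) with hC₀
  have hC₀1 : 1 ≤ C₀ := le_max_left _ _
  set fB : ℕ := (normalizedFactors ((B.factorial : ℕ) : ℤ[i])).toFinset.card with hfB
  refine ⟨C₀ ^ fB, by positivity, fun N k hk => ?_⟩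
  set s := normalizedFactors ((k : ℕ) : ℤ[i]) with hs
  -- reduce to product bound
  have step1 : (repCard N k : ℝ) ≤ ∏ x ∈ s.toFinset, ((s.count x + 1 : ℕ) : ℝ) := by
    have h := le_trans (repCard_le_powerset N k hk) (powerset_card_le s)
    calc (repCard N k : ℝ) ≤ ((∏ x ∈ s.toFinset, (s.count x + 1) : ℕ) : ℝ) := by exact_mod_cast h
      _ = ∏ x ∈ s.toFinset, ((s.count x + 1 : ℕ) : ℝ) := by push_cast; rfl
  -- per element bound
  have step2 : ∀ x ∈ s.toFinset,
      ((s.count x + 1 : ℕ) : ℝ) ≤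
        (if NmHom x < B then C₀ else 1) * ((NmHom x ^ s.count x : ℕ) : ℝ) ^ ε := by
    intro x hx
    have hprime : Prime x := prime_of_normalized_factor x (Multiset.mem_toFinset.mp hx)
    have h2 : 2 ≤ NmHom x := two_le_Nm_of_prime hprime
    by_cases hsmall : NmHom x < B
    · rw [if_pos hsmall]
      have key := small_factor_bound ε hε (s.count x)
      have hmono : ((2:ℝ) ^ s.count x) ^ ε ≤ ((NmHom x ^ s.count x : ℕ) : ℝ) ^ ε := by
        apply Real.rpow_le_rpow (by positivity) ?_ (le_of_lt hε)
        push_cast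
        exact pow_le_pow_left₀ (by norm_num) (by exact_mod_cast h2) _
      have hC₀2 : (2:ℝ) ^ ε / (ε * Real.log 2) ≤ C₀ := le_max_right _ _
      have hpos0 : (0:ℝ) ≤ ((2:ℝ) ^ s.count x) ^ ε := Real.rpow_nonneg (by positivity) _
      calc ((s.count x + 1 : ℕ) : ℝ) = (s.count x : ℝ) + 1 := by push_cast; ring
        _ ≤ ((2:ℝ) ^ ε / (ε * Real.log 2)) * ((2:ℝ) ^ s.count x) ^ ε := key
        _ ≤ C₀ * ((NmHom x ^ s.count x : ℕ) : ℝ) ^ ε :=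
            mul_le_mul hC₀2 hmono hpos0 (le_trans zero_le_one hC₀1)
    · rw [if_neg hsmall, one_mul]
      push_neg at hsmall
      have hv : (2:ℝ) ^ (1/ε) ≤ (NmHom x : ℝ) :=
        le_trans (Nat.le_ceil _) (by exact_mod_cast hsmall)
      have hlarge := large_factor_bound ε hε (s.count x) (NmHom x) hv
      calc ((s.count x + 1 : ℕ) : ℝ) = (s.count x : ℝ) + 1 := by push_cast; ring
        _ ≤ ((NmHom x : ℝ) ^ s.count x) ^ ε := hlarge
        _ = ((NmHom x ^ s.count x : ℕ) : ℝ) ^ ε := by norm_cast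
  have step3 : ∏ x ∈ s.toFinset, ((s.count x + 1 : ℕ) : ℝ) ≤
      (∏ x ∈ s.toFinset, (if NmHom x < B then C₀ else 1)) *
        ∏ x ∈ s.toFinset, ((NmHom x ^ s.count x : ℕ) : ℝ) ^ ε := by
    rw [← Finset.prod_mul_distrib]
    apply Finset.prod_le_prod (fun x _ => by positivity) step2
  have step4 : ∏ x ∈ s.toFinset, (if NmHom x < B then C₀ else 1) ≤ C₀ ^ fB := by
    have heq : ∏ x ∈ s.toFinset, (if NmHom x < B then C₀ else 1)
        = C₀ ^ (s.toFinset.filter fun x => NmHom x < B).card := by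
      rw [Finset.prod_ite, Finset.prod_const, Finset.prod_const, one_pow, mul_one]
    rw [heq]
    apply pow_le_pow_right₀ hC₀1
    apply Finset.card_le_card
    intro x hx
    rw [Finset.mem_filter] at hx
    exact small_prime_mem B (Nat.one_le_ceil_iff.mpr (by positivity)) hk hx.1 (le_of_lt hx.2)
  have step5 : ∏ x ∈ s.toFinset, ((NmHom x ^ s.count x : ℕ) : ℝ) ^ ε = (k:ℝ) ^ (2*ε) := by
    rw [Real.finset_prod_rpow _ _ (fun x _ => by positivity) ε]
    have h6 : ∏ x ∈ s.toFinset, ((NmHom x ^ s.count x : ℕ) : ℝ) = ((k^2 : ℕ) : ℝ) := by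
      rw [← prod_Nm_pow_count hk]
      push_cast
      rfl
    rw [h6, show ((k^2:ℕ):ℝ) = ((k:ℝ))^(2:ℕ) from by push_cast; ring,
      ← Real.rpow_natCast_mul (by positivity) 2 ε]
    norm_num
  have hprodnn : (0:ℝ) ≤ ∏ x ∈ s.toFinset, ((NmHom x ^ s.count x : ℕ) : ℝ) ^ ε :=
    Finset.prod_nonneg fun x _ => Real.rpow_nonneg (by positivity) _
  calc (repCard N k : ℝ) ≤ ∏ x ∈ s.toFinset, ((s.count x + 1 : ℕ) : ℝ) := step1
    _ ≤ (∏ x ∈ s.toFinset, (if NmHom x < B then C₀ else 1)) *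
        ∏ x ∈ s.toFinset, ((NmHom x ^ s.count x : ℕ) : ℝ) ^ ε := step3
    _ ≤ C₀ ^ fB * ∏ x ∈ s.toFinset, ((NmHom x ^ s.count x : ℕ) : ℝ) ^ ε :=
        mul_le_mul_of_nonneg_right step4 hprodnn
    _ = C₀ ^ fB * (k:ℝ) ^ (2*ε) := by rw [step5]



lemma e_add (s t : ℝ) : e (s + t) = e s * e t := by
  rw [e, e, e, ← Complex.exp_add]
  congr 1
  push_cast
  ring

lemma e_conj (s : ℝ) : (starRingEnd ℂ) (e s) = e (-s) := by
  rw [e, e, ← Complex.exp_conj]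
  congr 1
  simp only [map_mul, Complex.conj_I, Complex.conj_ofReal, map_ofNat]
  push_cast
  ring

lemma e_cont (r : ℝ) : Continuous fun t : ℝ => e (r * t) := by
  unfold e
  exact Complex.continuous_exp.comp (by continuity)

lemma integral_e (j : ℤ) : (∫ x in (0:ℝ)..1, e ((j:ℝ) * x)) = if j = 0 then 1 else 0 := by
  have hpt : ∀ x : ℝ, e ((j:ℝ) * x) = Complex.exp ((2 * Real.pi * Complex.I * j) * x) := by
    intro x
    rw [e]
    congr 1
    push_cast
    ring
  rw [intervalIntegral.integral_congr (g := fun x => Complex.exp ((2 * Real.pi * Complex.I * j) * x))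
    (fun x _ => hpt x)]
  by_cases hj : j = 0
  · subst hj
    simp
  · rw [if_neg hj, integral_exp_mul_complex]
    · have h1 : (2 * ↑Real.pi * Complex.I * (j:ℂ)) * (1:ℝ) = (j:ℂ) * (2 * ↑Real.pi * Complex.I) := by
        push_cast; ring
      have h2 : (2 * ↑Real.pi * Complex.I * (j:ℂ)) * ((0:ℝ):ℂ) = 0 := by push_cast; ring
      rw [h1, h2, Complex.exp_int_mul_two_pi_mul_I, Complex.exp_zero, sub_self, zero_div]
    · simp only [Ne, mul_eq_zero, Complex.I_ne_zero, or_false]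
      push_cast
      simp [Real.pi_ne_zero, Complex.I_ne_zero, hj]

lemma norm_ite01 (P : Prop) [Decidable P] : ‖(if P then (1:ℂ) else 0)‖ = if P then (1:ℝ) else 0 := by
  split_ifs <;> simp

lemma integral_const_mul_e (Z : ℂ) (j : ℤ) :
    (∫ t in (0:ℝ)..1, Z * e (((j:ℤ):ℝ) * t)) = Z * (if j = 0 then 1 else 0) := by
  rw [intervalIntegral.integral_const_mul, integral_e]

lemma main_integral {V : Type*} [Fintype V] [DecidableEq V] (c : V → ℂ) (A B : V → ℕ) :
    ∫ x in (0:ℝ)..1, ∫ y in (0:ℝ)..1,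
      (‖∑ v, c v * e ((A v : ℝ) * x + (B v : ℝ) * y)‖ ^ (2:ℕ) : ℝ)
    = (∑ v, ∑ w, c v * (starRingEnd ℂ) (c w) *
        (if A v = A w then 1 else 0) * (if B v = B w then 1 else 0)).re := by
  classical
  set g : ℝ → ℝ → ℂ := fun x y => ∑ v, c v * e ((A v : ℝ) * x + (B v : ℝ) * y) with hg
  have hpt : ∀ x y : ℝ, ((‖g x y‖ ^ (2:ℕ) : ℝ) : ℂ)
      = ∑ p : V × V, (c p.1 * (starRingEnd ℂ) (c p.2) *
            e ((((A p.1 : ℤ) - (A p.2 : ℤ) : ℤ) : ℝ) * x)) *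
          e ((((B p.1 : ℤ) - (B p.2 : ℤ) : ℤ) : ℝ) * y) := by
    intro x y
    have h1 : ((‖g x y‖ ^ (2:ℕ) : ℝ) : ℂ) = g x y * (starRingEnd ℂ) (g x y) := by
      rw [Complex.mul_conj, Complex.normSq_eq_norm_sq]
    rw [h1, hg]
    simp only [map_sum, map_mul]
    rw [Finset.sum_mul_sum, Fintype.sum_prod_type]
    apply Finset.sum_congr rfl
    intro v _
    apply Finset.sum_congr rfl
    intro w _
    rw [e_conj]
    calc c v * e ((A v : ℝ) * x + (B v : ℝ) * y) *
          ((starRingEnd ℂ) (c w) * e (-((A w : ℝ) * x + (B w : ℝ) * y)))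
        = (c v * (starRingEnd ℂ) (c w)) * (e ((A v : ℝ) * x + (B v : ℝ) * y) *
            e (-((A w : ℝ) * x + (B w : ℝ) * y))) := by ring
      _ = (c v * (starRingEnd ℂ) (c w)) * e (((A v : ℝ) * x + (B v : ℝ) * y) +
            -((A w : ℝ) * x + (B w : ℝ) * y)) := by rw [← e_add]
      _ = (c v * (starRingEnd ℂ) (c w)) * e (((((A v : ℤ) - (A w : ℤ) : ℤ) : ℝ) * x) +
            ((((B v : ℤ) - (B w : ℤ) : ℤ) : ℝ) * y)) := by
          congr 1
          push_cast
          ring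
      _ = (c v * (starRingEnd ℂ) (c w)) * (e ((((A v : ℤ) - (A w : ℤ) : ℤ) : ℝ) * x) *
            e ((((B v : ℤ) - (B w : ℤ) : ℤ) : ℝ) * y)) := by rw [← e_add]
      _ = _ := by ring
  -- inner integral
  have hinner : ∀ x : ℝ, (((∫ y in (0:ℝ)..1, (‖g x y‖ ^ (2:ℕ) : ℝ)) : ℝ) : ℂ)
      = ∑ p : V × V, (c p.1 * (starRingEnd ℂ) (c p.2) * (if B p.1 = B p.2 then 1 else 0)) *
          e ((((A p.1 : ℤ) - (A p.2 : ℤ) : ℤ) : ℝ) * x) := by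
    intro x
    rw [← intervalIntegral.integral_ofReal]
    rw [intervalIntegral.integral_congr (fun y (_ : y ∈ Set.uIcc (0:ℝ) 1) => hpt x y)]
    rw [intervalIntegral.integral_finset_sum
      (f := fun (p : V × V) (y : ℝ) => (c p.1 * (starRingEnd ℂ) (c p.2) *
        e ((((A p.1 : ℤ) - (A p.2 : ℤ) : ℤ) : ℝ) * x)) *
          e ((((B p.1 : ℤ) - (B p.2 : ℤ) : ℤ) : ℝ) * y))
      (fun p _ => ((continuous_const.mul (e_cont _)).intervalIntegrable 0 1))]
    apply Finset.sum_congr rfl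
    intro p _
    rw [intervalIntegral.integral_const_mul, integral_e]
    rw [show ((if ((B p.1 : ℤ) - (B p.2 : ℤ)) = 0 then (1:ℂ) else 0))
        = (if B p.1 = B p.2 then (1:ℂ) else 0) from by
      simp [sub_eq_zero, Nat.cast_inj]]
    ring
  -- outer integral
  have houter : (((∫ x in (0:ℝ)..1, ∫ y in (0:ℝ)..1, (‖g x y‖ ^ (2:ℕ) : ℝ)) : ℝ) : ℂ)
      = ∑ p : V × V, c p.1 * (starRingEnd ℂ) (c p.2) *
          (if A p.1 = A p.2 then 1 else 0) * (if B p.1 = B p.2 then 1 else 0) := by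
    rw [← intervalIntegral.integral_ofReal]
    rw [intervalIntegral.integral_congr (fun x (_ : x ∈ Set.uIcc (0:ℝ) 1) => hinner x)]
    rw [intervalIntegral.integral_finset_sum
      (f := fun (p : V × V) (x : ℝ) => (c p.1 * (starRingEnd ℂ) (c p.2) *
        (if B p.1 = B p.2 then 1 else 0)) *
          e ((((A p.1 : ℤ) - (A p.2 : ℤ) : ℤ) : ℝ) * x))
      (fun p _ => ((continuous_const.mul (e_cont _)).intervalIntegrable 0 1))]
    apply Finset.sum_congr rfl
    intro p _
    rw [intervalIntegral.integral_const_mul, integral_e]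
    rw [show ((if ((A p.1 : ℤ) - (A p.2 : ℤ)) = 0 then (1:ℂ) else 0))
        = (if A p.1 = A p.2 then (1:ℂ) else 0) from by
      simp [sub_eq_zero, Nat.cast_inj]]
    ring
  have hre := congrArg Complex.re houter
  rw [Complex.ofReal_re] at hre
  rw [hre, Fintype.sum_prod_type]


theorem final_bound (ε : ℝ) (hε : 0 < ε) :
    ∃ C > (0:ℝ), ∀ (N : ℕ) (a : Fin N → Fin N → ℂ),
      ∫ x in (0:ℝ)..1, ∫ y in (0:ℝ)..1,
          ‖∑ n : Fin N, ∑ m : Fin N,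
              a n m * e ((((n:ℕ)+1)^2 : ℝ) * x + (((m:ℕ)+1)^2 : ℝ) * y)‖ ^ (4:ℕ)
        ≤ C * (N:ℝ) ^ (4*ε) * (∑ n : Fin N, ∑ m : Fin N, ‖a n m‖ ^ 2) ^ 2 := by
  classical
  obtain ⟨C', hC', hrep⟩ := rep_bound (ε/2) (half_pos hε)
  refine ⟨C'^2 * (2:ℝ)^(2*ε), by positivity, fun N a => ?_⟩
  set U := Fin N × Fin N with hU
  set c : U × U → ℂ := fun p => a p.1.1 p.1.2 * a p.2.1 p.2.2 with hc
  set A : U × U → ℕ := fun p => ((p.1.1 : ℕ)+1)^2 + ((p.2.1 : ℕ)+1)^2 with hA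
  set B : U × U → ℕ := fun p => ((p.1.2 : ℕ)+1)^2 + ((p.2.2 : ℕ)+1)^2 with hB
  -- pointwise rewriting of the integrand
  have hpt : ∀ x y : ℝ,
      ‖∑ n : Fin N, ∑ m : Fin N,
          a n m * e ((((n:ℕ)+1)^2 : ℝ) * x + (((m:ℕ)+1)^2 : ℝ) * y)‖ ^ (4:ℕ)
      = (‖∑ p : U × U, c p * e ((A p : ℝ) * x + (B p : ℝ) * y)‖ ^ (2:ℕ) : ℝ) := by
    intro x y
    have hgS : (∑ n : Fin N, ∑ m : Fin N,
          a n m * e ((((n:ℕ)+1)^2 : ℝ) * x + (((m:ℕ)+1)^2 : ℝ) * y))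
        = ∑ u : U, a u.1 u.2 * e ((((u.1:ℕ)+1)^2 : ℝ) * x + (((u.2:ℕ)+1)^2 : ℝ) * y) :=
      (Fintype.sum_prod_type (fun u : U =>
        a u.1 u.2 * e ((((u.1:ℕ)+1)^2 : ℝ) * x + (((u.2:ℕ)+1)^2 : ℝ) * y))).symm
    have hsplit : (∑ p : U × U, c p * e ((A p : ℝ) * x + (B p : ℝ) * y))
        = ∑ u : U, ∑ u' : U, c (u, u') * e ((A (u, u') : ℝ) * x + (B (u, u') : ℝ) * y) :=
      Fintype.sum_prod_type _
    have hS2 : (∑ u : U, a u.1 u.2 * e ((((u.1:ℕ)+1)^2 : ℝ) * x + (((u.2:ℕ)+1)^2 : ℝ) * y)) *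
          (∑ u : U, a u.1 u.2 * e ((((u.1:ℕ)+1)^2 : ℝ) * x + (((u.2:ℕ)+1)^2 : ℝ) * y))
        = ∑ p : U × U, c p * e ((A p : ℝ) * x + (B p : ℝ) * y) := by
      rw [hsplit, Finset.sum_mul_sum]
      apply Finset.sum_congr rfl
      intro u _
      apply Finset.sum_congr rfl
      intro u' _
      calc a u.1 u.2 * e ((((u.1:ℕ)+1)^2 : ℝ) * x + (((u.2:ℕ)+1)^2 : ℝ) * y) *
            (a u'.1 u'.2 * e ((((u'.1:ℕ)+1)^2 : ℝ) * x + (((u'.2:ℕ)+1)^2 : ℝ) * y))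
          = (a u.1 u.2 * a u'.1 u'.2) *
              (e ((((u.1:ℕ)+1)^2 : ℝ) * x + (((u.2:ℕ)+1)^2 : ℝ) * y) *
               e ((((u'.1:ℕ)+1)^2 : ℝ) * x + (((u'.2:ℕ)+1)^2 : ℝ) * y)) := by ring
        _ = (a u.1 u.2 * a u'.1 u'.2) *
              e (((((u.1:ℕ)+1)^2 : ℝ) * x + (((u.2:ℕ)+1)^2 : ℝ) * y) +
                 ((((u'.1:ℕ)+1)^2 : ℝ) * x + (((u'.2:ℕ)+1)^2 : ℝ) * y)) := by rw [← e_add]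
        _ = c (u, u') * e ((A (u, u') : ℝ) * x + (B (u, u') : ℝ) * y) := by
            simp only [hc, hA, hB]
            congr 2
            push_cast
            ring
    rw [hgS, ← hS2]
    rw [show (4:ℕ) = 2*2 from rfl, pow_mul, _root_.norm_mul]
    ring
  have hint : (∫ x in (0:ℝ)..1, ∫ y in (0:ℝ)..1,
      ‖∑ n : Fin N, ∑ m : Fin N,
          a n m * e ((((n:ℕ)+1)^2 : ℝ) * x + (((m:ℕ)+1)^2 : ℝ) * y)‖ ^ (4:ℕ))
      = (∑ v : U × U, ∑ w : U × U, c v * (starRingEnd ℂ) (c w) *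
          (if A v = A w then 1 else 0) * (if B v = B w then 1 else 0)).re := by
    rw [intervalIntegral.integral_congr (g := fun x => ∫ y in (0:ℝ)..1,
        (‖∑ p : U × U, c p * e ((A p : ℝ) * x + (B p : ℝ) * y)‖ ^ (2:ℕ) : ℝ))
      (fun x _ => intervalIntegral.integral_congr (fun y _ => hpt x y))]
    exact main_integral c A B
  rw [hint]
  have hχsym : ∀ v w : U × U,
      ((if A v = A w then (1:ℝ) else 0) * (if B v = B w then (1:ℝ) else 0))
      = ((if A w = A v then (1:ℝ) else 0) * (if B w = B v then (1:ℝ) else 0)) := by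
    intro v w
    
    congr 1 <;> simp [eq_comm]
  have hχnn : ∀ v w : U × U,
      (0:ℝ) ≤ (if A v = A w then (1:ℝ) else 0) * (if B v = B w then (1:ℝ) else 0) := by
    intro v w
    positivity
  have h3 : (∑ v : U × U, ∑ w : U × U, c v * (starRingEnd ℂ) (c w) *
        (if A v = A w then 1 else 0) * (if B v = B w then 1 else 0)).re
      ≤ ∑ v : U × U, ∑ w : U × U, ‖c v‖ * ‖c w‖ *
          ((if A v = A w then (1:ℝ) else 0) * (if B v = B w then (1:ℝ) else 0)) := by
    refine le_trans (Complex.re_le_norm _) ?_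
    refine le_trans (norm_sum_le _ _) (Finset.sum_le_sum fun v _ => ?_)
    refine le_trans (norm_sum_le _ _) (Finset.sum_le_sum fun w _ => ?_)
    rw [_root_.norm_mul, _root_.norm_mul, _root_.norm_mul, RCLike.norm_conj,
      norm_ite01, norm_ite01]
    exact le_of_eq (by ring)
  have h4 : ∑ v : U × U, ∑ w : U × U, ‖c v‖ * ‖c w‖ *
        ((if A v = A w then (1:ℝ) else 0) * (if B v = B w then (1:ℝ) else 0))
      ≤ ∑ v : U × U, ∑ w : U × U, ‖c v‖^2 *
          ((if A v = A w then (1:ℝ) else 0) * (if B v = B w then (1:ℝ) else 0)) := by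
    have hhalf : ∀ v w : U × U, ‖c v‖ * ‖c w‖ *
          ((if A v = A w then (1:ℝ) else 0) * (if B v = B w then (1:ℝ) else 0))
        ≤ ((‖c v‖^2 + ‖c w‖^2)/2) *
          ((if A v = A w then (1:ℝ) else 0) * (if B v = B w then (1:ℝ) else 0)) := fun v w =>
      mul_le_mul_of_nonneg_right (by nlinarith [sq_nonneg (‖c v‖ - ‖c w‖)]) (hχnn v w)
    refine le_trans (Finset.sum_le_sum fun v _ => Finset.sum_le_sum fun w _ => hhalf v w) ?_
    have hswap : ∑ v : U × U, ∑ w : U × U, ‖c w‖^2 *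
          ((if A v = A w then (1:ℝ) else 0) * (if B v = B w then (1:ℝ) else 0))
        = ∑ v : U × U, ∑ w : U × U, ‖c v‖^2 *
          ((if A v = A w then (1:ℝ) else 0) * (if B v = B w then (1:ℝ) else 0)) := by
      rw [Finset.sum_comm]
      exact Finset.sum_congr rfl fun v _ => Finset.sum_congr rfl fun w _ => by rw [hχsym]
    have hid : ∑ v : U × U, ∑ w : U × U, ((‖c v‖^2 + ‖c w‖^2)/2) *
          ((if A v = A w then (1:ℝ) else 0) * (if B v = B w then (1:ℝ) else 0))
        = ∑ v : U × U, ∑ w : U × U, ‖c v‖^2 *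
          ((if A v = A w then (1:ℝ) else 0) * (if B v = B w then (1:ℝ) else 0)) := by
      have hexp : ∀ v w : U × U, ((‖c v‖^2 + ‖c w‖^2)/2) *
            ((if A v = A w then (1:ℝ) else 0) * (if B v = B w then (1:ℝ) else 0))
          = (‖c v‖^2 * ((if A v = A w then (1:ℝ) else 0) * (if B v = B w then (1:ℝ) else 0)))/2
            + (‖c w‖^2 * ((if A v = A w then (1:ℝ) else 0) *
                (if B v = B w then (1:ℝ) else 0)))/2 := fun v w => by ring
      simp_rw [hexp, Finset.sum_add_distrib, ← Finset.sum_div]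
      rw [hswap]
      ring
    rw [hid]
  -- fibers
  have h5 : ∀ v : U × U, (∑ w : U × U,
        ((if A v = A w then (1:ℝ) else 0) * (if B v = B w then (1:ℝ) else 0)))
      = ((repCard N (A v) : ℝ) * (repCard N (B v) : ℝ)) := by
    intro v
    have hχ1 : ∀ w : U × U, ((if A v = A w then (1:ℝ) else 0) * (if B v = B w then (1:ℝ) else 0))
        = if (A w = A v ∧ B w = B v) then (1:ℝ) else 0 := by
      intro w
      by_cases h1 : A v = A w
      · by_cases h2 : B v = B w
        · rw [if_pos h1, if_pos h2, if_pos ⟨h1.symm, h2.symm⟩, one_mul]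
        · rw [if_neg h2, if_neg (fun hh : A w = A v ∧ B w = B v => h2 hh.2.symm), mul_zero]
      · rw [if_neg h1, if_neg (fun hh : A w = A v ∧ B w = B v => h1 hh.1.symm), zero_mul]
    rw [Finset.sum_congr rfl fun w _ => hχ1 w, Finset.sum_boole]
    have hcard : (Finset.univ.filter fun w : U × U => A w = A v ∧ B w = B v).card
        = repCard N (A v) * repCard N (B v) := by
      have hmem : ∀ w : U × U, (w ∈ Finset.univ.filter fun w : U × U => A w = A v ∧ B w = B v)
          ↔ (((w.1.1, w.2.1), (w.1.2, w.2.2)) : U × U) ∈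
            Finset.univ.filter fun z : U × U =>
              (((z.1.1:ℕ)+1)^2 + ((z.1.2:ℕ)+1)^2 = A v) ∧
              (((z.2.1:ℕ)+1)^2 + ((z.2.2:ℕ)+1)^2 = B v) := by
        intro w
        simp only [Finset.mem_filter, Finset.mem_univ, true_and, hA, hB]
      rw [Finset.card_equiv
        (⟨fun w : U × U => ((w.1.1, w.2.1), (w.1.2, w.2.2)),
          fun z : U × U => ((z.1.1, z.2.1), (z.1.2, z.2.2)),
          fun w => rfl, fun z => rfl⟩ : (U × U) ≃ (U × U)) hmem]
      rw [show (Finset.univ.filter fun z : U × U =>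
              (((z.1.1:ℕ)+1)^2 + ((z.1.2:ℕ)+1)^2 = A v) ∧
              (((z.2.1:ℕ)+1)^2 + ((z.2.2:ℕ)+1)^2 = B v))
          = (Finset.univ.filter fun q : U => (((q.1:ℕ)+1)^2 + ((q.2:ℕ)+1)^2 = A v)) ×ˢ
            (Finset.univ.filter fun q : U => (((q.1:ℕ)+1)^2 + ((q.2:ℕ)+1)^2 = B v)) from by
        rw [← Finset.filter_product, Finset.univ_product_univ]]
      rw [Finset.card_product]
      rfl
    rw [hcard]
    push_cast
    ring
  -- per-v fiber bound
  have hbound : ∀ (k : ℕ) (n1 n2 : Fin N), k = ((n1:ℕ)+1)^2 + ((n2:ℕ)+1)^2 →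
      (repCard N k : ℝ) ≤ C' * ((2*N^2 : ℕ):ℝ)^(ε) := by
    intro k n1 n2 hk
    have hN : 0 < N := n1.pos
    have hk0 : k ≠ 0 := by rw [hk]; positivity
    have hkle : k ≤ 2*N^2 := by
      have hb : ∀ i : Fin N, ((i:ℕ)+1)^2 ≤ N^2 := fun i =>
        Nat.pow_le_pow_left (by omega) 2
      rw [hk]
      calc ((n1:ℕ)+1)^2 + ((n2:ℕ)+1)^2 ≤ N^2 + N^2 := Nat.add_le_add (hb _) (hb _)
        _ = 2*N^2 := by ring
    refine le_trans (hrep N k hk0) ?_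
    rw [show 2*(ε/2) = ε from by ring]
    apply mul_le_mul_of_nonneg_left _ (le_of_lt hC')
    exact Real.rpow_le_rpow (by positivity) (by exact_mod_cast hkle) (le_of_lt hε)
  have h6 : ∀ v : U × U, (repCard N (A v) : ℝ) * (repCard N (B v) : ℝ)
      ≤ C'^2 * (2:ℝ)^(2*ε) * (N:ℝ)^(4*ε) := by
    intro v
    have hN : 0 < N := v.1.1.pos
    have hA' := hbound (A v) v.1.1 v.2.1 rfl
    have hB' := hbound (B v) v.1.2 v.2.2 rfl
    have hnn2 : (0:ℝ) ≤ C' * ((2*N^2 : ℕ):ℝ)^(ε) := by positivity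
    calc (repCard N (A v) : ℝ) * (repCard N (B v) : ℝ)
        ≤ (C' * ((2*N^2 : ℕ):ℝ)^(ε)) * (C' * ((2*N^2 : ℕ):ℝ)^(ε)) :=
          mul_le_mul hA' hB' (by positivity) hnn2
      _ = C'^2 * (((2*N^2 : ℕ):ℝ)^(ε) * ((2*N^2 : ℕ):ℝ)^(ε)) := by ring
      _ = C'^2 * (2:ℝ)^(2*ε) * (N:ℝ)^(4*ε) := by
          rw [← Real.rpow_add (by positivity : (0:ℝ) < ((2*N^2 : ℕ):ℝ))]
          rw [show ((2*N^2 : ℕ):ℝ) = 2 * (N:ℝ)^2 from by push_cast; ring]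
          rw [Real.mul_rpow (by norm_num) (by positivity)]
          rw [show ((N:ℝ)^2) = (N:ℝ)^(2:ℕ) from by norm_num]
          rw [← Real.rpow_natCast_mul (by positivity) 2 (ε + ε)]
          rw [show ((2:ℕ):ℝ) * (ε + ε) = 4*ε from by push_cast; ring]
          rw [show ε + ε = 2*ε from by ring]
          ring
  -- sum of squares
  have h7 : ∑ v : U × U, ‖c v‖^2
      = (∑ n : Fin N, ∑ m : Fin N, ‖a n m‖ ^ 2) ^ 2 := by
    have hg2 : (∑ n : Fin N, ∑ m : Fin N, ‖a n m‖ ^ 2) = ∑ u : U, ‖a u.1 u.2‖^2 :=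
      (Fintype.sum_prod_type (fun u : U => ‖a u.1 u.2‖^2)).symm
    have hg3 : (∑ v : U × U, ‖c v‖^2) = ∑ u : U, ∑ u' : U, ‖c (u, u')‖^2 :=
      Fintype.sum_prod_type _
    rw [hg2, hg3, sq, Finset.sum_mul_sum]
    apply Finset.sum_congr rfl
    intro u _
    apply Finset.sum_congr rfl
    intro u' _
    simp only [hc, _root_.norm_mul, mul_pow]
  calc (∑ v : U × U, ∑ w : U × U, c v * (starRingEnd ℂ) (c w) *
        (if A v = A w then 1 else 0) * (if B v = B w then 1 else 0)).re
      ≤ ∑ v : U × U, ∑ w : U × U, ‖c v‖ * ‖c w‖ *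
          ((if A v = A w then (1:ℝ) else 0) * (if B v = B w then (1:ℝ) else 0)) := h3
    _ ≤ ∑ v : U × U, ∑ w : U × U, ‖c v‖^2 *
          ((if A v = A w then (1:ℝ) else 0) * (if B v = B w then (1:ℝ) else 0)) := h4
    _ = ∑ v : U × U, ‖c v‖^2 * ((repCard N (A v) : ℝ) * (repCard N (B v) : ℝ)) := by
        apply Finset.sum_congr rfl
        intro v _
        rw [← Finset.mul_sum, h5 v]
    _ ≤ ∑ v : U × U, ‖c v‖^2 * (C'^2 * (2:ℝ)^(2*ε) * (N:ℝ)^(4*ε)) :=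
        Finset.sum_le_sum fun v _ => mul_le_mul_of_nonneg_left (h6 v) (by positivity)
    _ = C'^2 * (2:ℝ)^(2*ε) * (N:ℝ)^(4*ε) * ∑ v : U × U, ‖c v‖^2 := by
        rw [← Finset.sum_mul]
        ring
    _ = C'^2 * (2:ℝ)^(2*ε) * (N:ℝ)^(4*ε) *
          (∑ n : Fin N, ∑ m : Fin N, ‖a n m‖ ^ 2) ^ 2 := by rw [h7]

end Lambda4Aux

theorem stmt0 :
    ∀ ε > (0:ℝ), ∃ C > (0:ℝ), ∀ (N : ℕ) (a : Fin N → Fin N → ℂ),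
      ∫ x in (0:ℝ)..1, ∫ y in (0:ℝ)..1,
          ‖∑ n : Fin N, ∑ m : Fin N,
              a n m * e ((((n:ℕ)+1)^2 : ℝ) * x + (((m:ℕ)+1)^2 : ℝ) * y)‖ ^ (4:ℕ)
        ≤ C * (N:ℝ) ^ (4*ε) * (∑ n : Fin N, ∑ m : Fin N, ‖a n m‖ ^ 2) ^ 2 := fun ε hε =>
  Lambda4Aux.final_bound ε hε
end

section
/- Let P_R ⊂ M (a compact manifold in [0,1]^d) be sets with |P_R| ∼ R^{2d/p} satisfying the tight decoupling inequality (1/R^d)∫_{[0,R]^d} |∑_{ξ∈P_R} a_ξ e(ξ·x)|^p dx ≤ C ‖a_ξ‖_{ℓ²}^p for all complex a_ξ, for some p > 2. Let ν be any weak-* limit point of the empirical measures ν_R = |P_R|^{−1} ∑_{ξ∈P_R} δ_ξ. Then ν is a Borel probability measure on M satisfying the restriction-type estimate ‖(g dν)^∧‖_{L^p(ℝ^d)} ≤ C' ‖g‖_{L²(dν)} for all continuous g on M. -/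
open MeasureTheory Complex Filter
open scoped ENNReal

def unitCube (d : ℕ) : Set (Fin d → ℝ) := Set.univ.pi fun _ => Set.Icc 0 1

lemma e_add (s t : ℝ) : e (s + t) = e s * e t := by
  unfold e; rw [← Complex.exp_add]; push_cast; ring_nf

lemma conj_e (t : ℝ) : (starRingEnd ℂ) (e t) = e (-t) := by
  unfold e; rw [← Complex.exp_conj]; congr 1
  simp only [map_mul, Complex.conj_I, Complex.conj_ofReal, map_ofNat]
  push_cast; ring

lemma norm_e (t : ℝ) : ‖e t‖ = 1 := by
  unfold e
  rw [Complex.norm_exp]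
  norm_num [Complex.mul_re, Complex.mul_im]

lemma e_continuous : Continuous e := by
  unfold e; fun_prop

set_option maxHeartbeats 2000000 in
theorem stmt9 (d : ℕ) (hd : 0 < d) (p : ℝ) (hp : 2 < p)
    (M : Set (Fin d → ℝ)) (hMcpt : IsCompact M) (hMcube : M ⊆ unitCube d)
    (R : ℕ → ℝ) (hR1 : ∀ j, 1 ≤ R j) (hR : Tendsto R atTop atTop)
    (P : ℕ → Finset (Fin d → ℝ))
    (c₀ C₀ C : ℝ) (hc₀ : 0 < c₀) (hC₀ : 0 < C₀) (hC : 0 < C)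
    (hPM : ∀ j, ∀ ξ ∈ P j, ξ ∈ M)
    (hcard : ∀ j, c₀ * R j ^ (2*(d:ℝ)/p) ≤ ((P j).card : ℝ) ∧
                  ((P j).card : ℝ) ≤ C₀ * R j ^ (2*(d:ℝ)/p))
    (hdec : ∀ j, ∀ a : (Fin d → ℝ) → ℂ,
      (1 / R j ^ (d:ℝ)) *
          ∫ x in Set.univ.pi fun _ : Fin d => Set.Icc (0:ℝ) (R j),
            ‖∑ ξ ∈ P j, a ξ * e (∑ i, ξ i * x i)‖ ^ p
        ≤ C * Real.sqrt (∑ ξ ∈ P j, ‖a ξ‖ ^ 2) ^ p)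
    (ν : Measure (Fin d → ℝ)) [IsFiniteMeasure ν]
    (hweak : ∀ g : (Fin d → ℝ) → ℂ, Continuous g →
      Tendsto (fun j => (((P j).card : ℂ))⁻¹ * ∑ ξ ∈ P j, g ξ) atTop
        (nhds (∫ ξ, g ξ ∂ν))) :
    IsProbabilityMeasure ν ∧ ν Mᶜ = 0 ∧
      ∃ C' > (0:ℝ), ∀ g : (Fin d → ℝ) → ℂ, Continuous g →
        eLpNorm (fun x : Fin d → ℝ => ∫ ξ, g ξ * e (-(∑ i, ξ i * x i)) ∂ν)
            (ENNReal.ofReal p) volume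
          ≤ ENNReal.ofReal (C' * Real.sqrt (∫ ξ, ‖g ξ‖ ^ 2 ∂ν)) := by
  have hp0 : (0:ℝ) < p := by linarith
  -- positivity of cardinalities
  have hRpos : ∀ j, (0:ℝ) < R j := fun j => lt_of_lt_of_le one_pos (hR1 j)
  have hcard_pos : ∀ j, (0:ℝ) < ((P j).card : ℝ) := by
    intro j
    refine lt_of_lt_of_le ?_ (hcard j).1
    have : (1:ℝ) ≤ R j ^ (2*(d:ℝ)/p) :=
      Real.one_le_rpow (hR1 j) (by positivity)
    nlinarith
  -- ν is a probability measure
  have hprob : IsProbabilityMeasure ν := by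
    have h1 := hweak (fun _ => 1) continuous_const
    have h2 : ∀ j, (((P j).card : ℂ))⁻¹ * ∑ _ξ ∈ P j, (1:ℂ) = 1 := by
      intro j
      have : ((P j).card : ℂ) ≠ 0 := by
        simpa using (hcard_pos j).ne'
      simp [Finset.sum_const, this]
    rw [tendsto_congr h2] at h1
    have h3 : (∫ _ξ, (1:ℂ) ∂ν) = 1 := tendsto_nhds_unique h1 tendsto_const_nhds
    rw [integral_const] at h3
    have h4 : ((ν Set.univ).toReal : ℂ) = 1 := by simp at h3; exact_mod_cast h3
    have h5 : (ν Set.univ).toReal = 1 := by exact_mod_cast h4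
    exact ⟨(ENNReal.toReal_eq_one_iff _).mp h5⟩
  refine ⟨hprob, ?_, ?_⟩
  · -- ν Mᶜ = 0
    have hMne : M.Nonempty := by
      have h0 : 0 < (P 0).card := by exact_mod_cast hcard_pos 0
      obtain ⟨ξ, hξ⟩ := Finset.card_pos.mp h0
      exact ⟨ξ, hPM 0 ξ hξ⟩
    set gn : ℕ → (Fin d → ℝ) → ℝ :=
      fun n x => max (1 - n * Metric.infDist x M) 0 with hgn
    have hgnc : ∀ n, Continuous (gn n) := fun n =>
      ((continuous_const.sub
        (continuous_const.mul (Metric.continuous_infDist_pt M))).max continuous_const)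
    have hgn1 : ∀ n x, x ∈ M → gn n x = 1 := by
      intro n x hx
      simp [hgn, (hMcpt.isClosed.mem_iff_infDist_zero hMne).mp hx]
    have hgnle : ∀ n x, ‖gn n x‖ ≤ 1 := by
      intro n x
      have h1 : (0:ℝ) ≤ max (1 - n * Metric.infDist x M) 0 := le_max_right _ _
      have h2 : max (1 - n * Metric.infDist x M) 0 ≤ 1 := by
        have := Metric.infDist_nonneg (x := x) (s := M)
        have hn : (0:ℝ) ≤ (n:ℝ) := Nat.cast_nonneg n
        apply max_le ?_ zero_le_one
        nlinarith
      rw [hgn, Real.norm_eq_abs, _root_.abs_of_nonneg h1]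
      exact h2
    have hint : ∀ n, ∫ x, gn n x ∂ν = 1 := by
      intro n
      have hw := hweak (fun x => ((gn n x : ℝ) : ℂ))
        (Complex.continuous_ofReal.comp (hgnc n))
      have hconst : ∀ j, (((P j).card : ℂ))⁻¹ * ∑ ξ ∈ P j, ((gn n ξ : ℝ) : ℂ) = 1 := by
        intro j
        have hcne : ((P j).card : ℂ) ≠ 0 := by simpa using (hcard_pos j).ne'
        have : ∀ ξ ∈ P j, ((gn n ξ : ℝ) : ℂ) = 1 := by
          intro ξ hξ; rw [hgn1 n ξ (hPM j ξ hξ)]; norm_num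
        rw [Finset.sum_congr rfl this]
        simp [hcne]
      rw [tendsto_congr hconst] at hw
      have h3 : (∫ x, ((gn n x : ℝ) : ℂ) ∂ν) = 1 := tendsto_nhds_unique hw tendsto_const_nhds
      have h3' : ∫ x, (RCLike.ofReal (gn n x) : ℂ) ∂ν = 1 := h3
      rw [integral_ofReal] at h3'
      simpa using h3' 
    have hlim : ∀ x, Tendsto (fun n => gn n x) atTop
        (nhds (M.indicator (fun _ => (1:ℝ)) x)) := by
      intro x
      by_cases hx : x ∈ M
      · simp only [Set.indicator_of_mem hx]
        have : ∀ n, gn n x = 1 := fun n => hgn1 n x hx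
        rw [tendsto_congr this]; exact tendsto_const_nhds
      · simp only [Set.indicator_of_notMem hx]
        have hδ : 0 < Metric.infDist x M := by
          rcases lt_or_eq_of_le (Metric.infDist_nonneg (x := x) (s := M)) with h | h
          · exact h
          · exact absurd ((hMcpt.isClosed.mem_iff_infDist_zero hMne).mpr h.symm) hx
        apply Tendsto.congr' ?_ (tendsto_const_nhds (x := (0:ℝ)))
        filter_upwards [eventually_ge_atTop ⌈1 / Metric.infDist x M⌉₊] with n hn
        have h1 : 1 / Metric.infDist x M ≤ (n:ℝ) :=
          le_trans (Nat.le_ceil _) (by exact_mod_cast hn)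
        have h2 : (1:ℝ) ≤ n * Metric.infDist x M := by
          rw [div_le_iff₀ hδ] at h1; linarith
        rw [hgn]; symm
        exact max_eq_right (by linarith)
    have hMmeas : MeasurableSet M := hMcpt.isClosed.measurableSet
    have hInd : ∫ x, M.indicator (fun _ => (1:ℝ)) x ∂ν = 1 := by
      have hT := tendsto_integral_of_dominated_convergence (μ := ν)
        (F := fun n => gn n) (f := M.indicator (fun _ => (1:ℝ))) (fun _ => (1:ℝ))
        (fun n => (hgnc n).aestronglyMeasurable)
        (integrable_const 1)
        (fun n => Eventually.of_forall (fun x => hgnle n x))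
        (Eventually.of_forall hlim)
      rw [tendsto_congr hint] at hT
      exact tendsto_nhds_unique hT tendsto_const_nhds
    rw [integral_indicator_const _ hMmeas] at hInd
    have hνM : ν M = 1 := by
      have : (ν M).toReal = 1 := by simp at hInd; exact hInd
      exact (ENNReal.toReal_eq_one_iff _).mp this
    rw [measure_compl hMmeas (measure_ne_top ν M), hνM, hprob.measure_univ, tsub_self]
  · -- the restriction estimate
    have hrpowc : Continuous fun t : ℝ => t ^ p :=
      continuous_iff_continuousAt.mpr fun t => Real.continuousAt_rpow_const t p (Or.inr hp0.le)
    set K : ℝ := C / c₀ ^ (p/2) with hK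
    have hKpos : 0 < K := by positivity
    refine ⟨K ^ (1/p), by positivity, ?_⟩
    intro g hg
    set I : ℝ := ∫ ξ, ‖g ξ‖ ^ 2 ∂ν with hI
    have hInn : 0 ≤ I := integral_nonneg (fun ξ => by positivity)
    set S : ℕ → ℝ := fun j => (((P j).card : ℝ))⁻¹ * ∑ ξ ∈ P j, ‖g ξ‖ ^ 2 with hS
    have hSnn : ∀ j, 0 ≤ S j := by
      intro j
      apply mul_nonneg (by positivity)
      exact Finset.sum_nonneg fun ξ _ => by positivity
    have hStend : Tendsto S atTop (nhds I) := by
      have hw := hweak (fun ξ => ((‖g ξ‖ ^ 2 : ℝ) : ℂ))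
        (Complex.continuous_ofReal.comp ((hg.norm).pow 2))
      have hlimval : (∫ ξ, ((‖g ξ‖ ^ 2 : ℝ) : ℂ) ∂ν) = ((I : ℝ) : ℂ) := by
        rw [hI]
        exact integral_ofReal
      have hseq : ∀ j, (((P j).card : ℂ))⁻¹ * ∑ ξ ∈ P j, ((‖g ξ‖ ^ 2 : ℝ) : ℂ)
          = ((S j : ℝ) : ℂ) := by
        intro j; rw [hS]; push_cast; ring
      rw [tendsto_congr hseq, hlimval, tendsto_ofReal_iff] at hw
      exact hw
    set f : ℕ → (Fin d → ℝ) → ℂ :=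
      fun j x => (((P j).card : ℂ))⁻¹ * ∑ ξ ∈ P j, g ξ * e (-(∑ i, ξ i * x i)) with hf
    set F : (Fin d → ℝ) → ℂ := fun x => ∫ ξ, g ξ * e (-(∑ i, ξ i * x i)) ∂ν with hF
    have hfc : ∀ j, Continuous (f j) := by
      intro j
      apply continuous_const.mul
      apply continuous_finset_sum
      intro ξ _
      apply continuous_const.mul
      exact e_continuous.comp
        ((continuous_finset_sum _ fun i _ => continuous_const.mul (continuous_apply i)).neg)
    have hconv : ∀ x, Tendsto (fun j => f j x) atTop (nhds (F x)) := by
      intro x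
      have hcont : Continuous fun ξ : Fin d → ℝ => g ξ * e (-(∑ i, ξ i * x i)) := by
        apply hg.mul
        exact e_continuous.comp
          ((continuous_finset_sum _ fun i _ => (continuous_apply i).mul continuous_const).neg)
      exact hweak _ hcont
    have hFmeas : Measurable F :=
      measurable_of_tendsto_metrizable (fun j => (hfc j).measurable)
        (tendsto_pi_nhds.mpr hconv)
    have hkey : ∀ (n : ℕ) (j : ℕ), 2 * (n:ℝ) ≤ R j →
        ∫⁻ x in Set.univ.pi (fun _ : Fin d => Set.Icc (-(n:ℝ)) (n:ℝ)),
            ENNReal.ofReal (‖f j x‖ ^ p) ∂volume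
          ≤ ENNReal.ofReal (K * S j ^ (p/2)) := by
      intro n j hnj
      set c : ℝ := ((P j).card : ℝ) with hc
      have hcpos : 0 < c := hcard_pos j
      set y : Fin d → ℝ := fun _ => -(n:ℝ) with hy
      set Q : Set (Fin d → ℝ) := Set.univ.pi (fun _ => Set.Icc (0:ℝ) (R j)) with hQ
      set box : Set (Fin d → ℝ) :=
        Set.univ.pi (fun _ : Fin d => Set.Icc (-(n:ℝ)) (n:ℝ)) with hbx
      set a : (Fin d → ℝ) → ℂ :=
        fun ξ => (starRingEnd ℂ) ((((P j).card : ℂ))⁻¹ * g ξ) * e (∑ i, ξ i * y i) with ha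
      -- the conjugation identity
      have hid : ∀ u, (starRingEnd ℂ) (f j (y + u))
          = ∑ ξ ∈ P j, a ξ * e (∑ i, ξ i * u i) := by
        intro u
        simp only [hf, Pi.add_apply, Finset.mul_sum, map_sum]
        refine Finset.sum_congr rfl fun ξ _ => ?_
        have h1 : -(∑ i, ξ i * (y i + u i))
            = (-(∑ i, ξ i * y i)) + (-(∑ i, ξ i * u i)) := by
          rw [← neg_add]
          congr 1
          rw [← Finset.sum_add_distrib]
          exact Finset.sum_congr rfl fun i _ => by ring
        rw [h1, e_add]
        simp only [map_mul, conj_e, neg_neg, ha]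
        ring
      have hnorm : ∀ u, ‖f j (y + u)‖ = ‖∑ ξ ∈ P j, a ξ * e (∑ i, ξ i * u i)‖ := by
        intro u
        rw [← hid u, RCLike.norm_conj]
      -- compactness and integrability
      have hQc : IsCompact Q := isCompact_univ_pi fun _ => isCompact_Icc
      have hboxc : IsCompact box := isCompact_univ_pi fun _ => isCompact_Icc
      have hbigc : IsCompact ((fun u => y + u) '' Q) :=
        hQc.image (continuous_const.add continuous_id)
      have hcontp : Continuous fun x => ‖f j x‖ ^ p := hrpowc.comp (hfc j).norm
      have hIntBig : IntegrableOn (fun x => ‖f j x‖ ^ p) ((fun u => y + u) '' Q) volume :=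
        ContinuousOn.integrableOn_compact hbigc hcontp.continuousOn
      have hIntBox : IntegrableOn (fun x => ‖f j x‖ ^ p) box volume :=
        ContinuousOn.integrableOn_compact hboxc hcontp.continuousOn
      have hsub : box ⊆ (fun u => y + u) '' Q := by
        intro x hx
        refine ⟨fun i => x i + (n:ℝ), ?_, ?_⟩
        · intro i _
          have hxi := hx i (Set.mem_univ i)
          simp only [Set.mem_Icc] at hxi ⊢
          constructor
          · linarith [hxi.1]
          · linarith [hxi.2]
        · funext i
          simp [hy]
      -- the real-integral estimate
      have step1 : ∫ x in box, ‖f j x‖ ^ p ∂volume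
          ≤ ∫ x in (fun u => y + u) '' Q, ‖f j x‖ ^ p ∂volume :=
        setIntegral_mono_set hIntBig
          (Eventually.of_forall fun x => Real.rpow_nonneg (norm_nonneg _) p)
          (HasSubset.Subset.eventuallyLE hsub)
      have step2 : ∫ x in (fun u => y + u) '' Q, ‖f j x‖ ^ p ∂volume
          = ∫ u in Q, ‖∑ ξ ∈ P j, a ξ * e (∑ i, ξ i * u i)‖ ^ p ∂volume := by
        rw [(measurePreserving_add_left volume y).setIntegral_image_emb
          (measurableEmbedding_addLeft y) _ Q]
        refine integral_congr_ae (Eventually.of_forall fun u => ?_)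
        show ‖f j (y + u)‖ ^ p = _
        rw [hnorm u]
      -- apply the decoupling hypothesis
      have hd := hdec j a
      have hRd : (0:ℝ) < R j ^ (d:ℝ) := Real.rpow_pos_of_pos (hRpos j) _
      have step4 : ∫ u in Q, ‖∑ ξ ∈ P j, a ξ * e (∑ i, ξ i * u i)‖ ^ p ∂volume
          ≤ R j ^ (d:ℝ) * (C * Real.sqrt (∑ ξ ∈ P j, ‖a ξ‖ ^ 2) ^ p) := by
        rw [one_div, inv_mul_le_iff₀ hRd] at hd
        exact hd
      -- compute the ℓ² norm of a
      have hnorma : ∀ ξ, ‖a ξ‖ = c⁻¹ * ‖g ξ‖ := by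
        intro ξ
        rw [ha]
        simp only [norm_mul, RCLike.norm_conj, norm_e, norm_inv, mul_one]
        congr 1
        rw [hc]
        norm_cast
      have hsuma : ∑ ξ ∈ P j, ‖a ξ‖ ^ 2 = c⁻¹ * S j := by
        simp only [hnorma, mul_pow]
        rw [← Finset.mul_sum, hS]
        ring
      -- rpow algebra
      have hc2 : (0:ℝ) ≤ c⁻¹ * S j := mul_nonneg (by positivity) (hSnn j)
      have hsqrt : Real.sqrt (∑ ξ ∈ P j, ‖a ξ‖ ^ 2) ^ p
          = (c⁻¹) ^ (p/2) * S j ^ (p/2) := by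
        rw [hsuma, Real.sqrt_eq_rpow, ← Real.rpow_mul hc2,
          show (1:ℝ)/2 * p = p/2 by ring,
          Real.mul_rpow (by positivity) (hSnn j)]
      have h6 : R j ^ (d:ℝ) ≤ (c / c₀) ^ (p/2) := by
        have h61 : (R j ^ (2*(d:ℝ)/p)) ^ (p/2) = R j ^ (d:ℝ) := by
          rw [← Real.rpow_mul (hRpos j).le]
          congr 1
          field_simp
        rw [← h61]
        apply Real.rpow_le_rpow (Real.rpow_nonneg (hRpos j).le _) ?_ (by positivity)
        rw [le_div_iff₀ hc₀]
        calc R j ^ (2*(d:ℝ)/p) * c₀ = c₀ * R j ^ (2*(d:ℝ)/p) := by ring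
          _ ≤ c := (hcard j).1
      have h7 : R j ^ (d:ℝ) * (c⁻¹) ^ (p/2) ≤ (c₀ ^ (p/2))⁻¹ := by
        have h71 : R j ^ (d:ℝ) * (c⁻¹) ^ (p/2) ≤ (c / c₀) ^ (p/2) * (c⁻¹) ^ (p/2) :=
          mul_le_mul_of_nonneg_right h6 (Real.rpow_nonneg (inv_nonneg.mpr hcpos.le) _)
        refine le_trans h71 ?_
        have hcc : c / c₀ * c⁻¹ = c₀⁻¹ := by field_simp
        rw [← Real.mul_rpow (div_nonneg hcpos.le hc₀.le) (inv_nonneg.mpr hcpos.le),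
          hcc, Real.inv_rpow hc₀.le]
      have hreal : ∫ x in box, ‖f j x‖ ^ p ∂volume ≤ K * S j ^ (p/2) := by
        calc ∫ x in box, ‖f j x‖ ^ p ∂volume
            ≤ R j ^ (d:ℝ) * (C * Real.sqrt (∑ ξ ∈ P j, ‖a ξ‖ ^ 2) ^ p) := by
              rw [step2] at step1
              exact le_trans step1 step4
          _ = C * ((R j ^ (d:ℝ) * (c⁻¹) ^ (p/2)) * S j ^ (p/2)) := by
              rw [hsqrt]; ring
          _ ≤ C * ((c₀ ^ (p/2))⁻¹ * S j ^ (p/2)) := by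
              apply mul_le_mul_of_nonneg_left ?_ hC.le
              exact mul_le_mul_of_nonneg_right h7 (Real.rpow_nonneg (hSnn j) _)
          _ = K * S j ^ (p/2) := by
              rw [hK]; ring
      -- convert to an ENNReal bound
      rw [← ofReal_integral_eq_lintegral_ofReal hIntBox
        (Eventually.of_forall fun x => Real.rpow_nonneg (norm_nonneg _) p)]
      exact ENNReal.ofReal_le_ofReal hreal
    have hbox : ∀ n : ℕ,
        ∫⁻ x in Set.univ.pi (fun _ : Fin d => Set.Icc (-(n:ℝ)) (n:ℝ)),
            ENNReal.ofReal (‖F x‖ ^ p) ∂volume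
          ≤ ENNReal.ofReal (K * I ^ (p/2)) := by
      intro n
      have hmeasj : ∀ j, Measurable fun x => ENNReal.ofReal (‖f j x‖ ^ p) := fun j =>
        ENNReal.measurable_ofReal.comp ((hrpowc.comp (hfc j).norm).measurable)
      have hlimx : ∀ x, Tendsto (fun j => ENNReal.ofReal (‖f j x‖ ^ p)) atTop
          (nhds (ENNReal.ofReal (‖F x‖ ^ p))) := by
        intro x
        exact (ENNReal.continuous_ofReal.tendsto _).comp
          (((Real.continuousAt_rpow_const _ p (Or.inr hp0.le)).tendsto).comp
            ((continuous_norm.tendsto _).comp (hconv x)))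
      have h1 : ∀ x, ENNReal.ofReal (‖F x‖ ^ p)
          = liminf (fun j => ENNReal.ofReal (‖f j x‖ ^ p)) atTop :=
        fun x => ((hlimx x).liminf_eq).symm
      have hble : Tendsto (fun j => ENNReal.ofReal (K * S j ^ (p/2))) atTop
          (nhds (ENNReal.ofReal (K * I ^ (p/2)))) := by
        apply (ENNReal.continuous_ofReal.tendsto _).comp
        exact (tendsto_const_nhds.mul
          (((Real.continuousAt_rpow_const I (p/2) (Or.inr (by positivity))).tendsto).comp hStend))
      calc ∫⁻ x in Set.univ.pi (fun _ : Fin d => Set.Icc (-(n:ℝ)) (n:ℝ)),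
              ENNReal.ofReal (‖F x‖ ^ p) ∂volume
          = ∫⁻ x in Set.univ.pi (fun _ : Fin d => Set.Icc (-(n:ℝ)) (n:ℝ)),
              liminf (fun j => ENNReal.ofReal (‖f j x‖ ^ p)) atTop ∂volume :=
            lintegral_congr fun x => h1 x
        _ ≤ liminf (fun j => ∫⁻ x in Set.univ.pi (fun _ : Fin d => Set.Icc (-(n:ℝ)) (n:ℝ)),
              ENNReal.ofReal (‖f j x‖ ^ p) ∂volume) atTop :=
            lintegral_liminf_le hmeasj
        _ ≤ liminf (fun j => ENNReal.ofReal (K * S j ^ (p/2))) atTop := by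
            refine liminf_le_liminf ?_ (by isBoundedDefault) (by isBoundedDefault)
            filter_upwards [hR.eventually_ge_atTop (2 * (n:ℝ))] with j hj
            exact hkey n j hj
        _ = ENNReal.ofReal (K * I ^ (p/2)) := hble.liminf_eq
    have htotal : ∫⁻ x, ENNReal.ofReal (‖F x‖ ^ p) ∂volume
        ≤ ENNReal.ofReal (K * I ^ (p/2)) := by
      set h : (Fin d → ℝ) → ℝ≥0∞ := fun x => ENNReal.ofReal (‖F x‖ ^ p) with hh
      have hmeasF : Measurable h :=
        ENNReal.measurable_ofReal.comp ((hrpowc.measurable).comp hFmeas.norm)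
      have hboxmeas : ∀ n : ℕ,
          MeasurableSet (Set.univ.pi (fun _ : Fin d => Set.Icc (-(n:ℝ)) (n:ℝ))) :=
        fun n => MeasurableSet.univ_pi fun i => measurableSet_Icc
      have hsubbox : ∀ m n : ℕ, m ≤ n →
          (Set.univ.pi (fun _ : Fin d => Set.Icc (-(m:ℝ)) (m:ℝ)))
            ⊆ Set.univ.pi (fun _ : Fin d => Set.Icc (-(n:ℝ)) (n:ℝ)) := by
        intro m n hmn
        apply Set.pi_mono
        intro i _
        have : (m:ℝ) ≤ (n:ℝ) := by exact_mod_cast hmn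
        exact Set.Icc_subset_Icc (by linarith) this
      have hcover : ∀ x : Fin d → ℝ, ∃ n : ℕ,
          x ∈ Set.univ.pi (fun _ : Fin d => Set.Icc (-(n:ℝ)) (n:ℝ)) := by
        intro x
        refine ⟨⌈‖x‖⌉₊, ?_⟩
        intro i _
        have h1 : ‖x i‖ ≤ ‖x‖ := norm_le_pi_norm x i
        have h2 : ‖x‖ ≤ (⌈‖x‖⌉₊ : ℝ) := Nat.le_ceil _
        rw [Real.norm_eq_abs, abs_le] at h1
        constructor <;> [linarith [h1.1]; linarith [h1.2]]
      have hmono : Monotone fun n : ℕ =>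
          (Set.univ.pi (fun _ : Fin d => Set.Icc (-(n:ℝ)) (n:ℝ))).indicator h := by
        intro m n hmn x
        exact Set.indicator_le_indicator_of_subset (hsubbox m n hmn) (fun _ => zero_le) x
      have hiSup : ∀ x, (⨆ n : ℕ,
          (Set.univ.pi (fun _ : Fin d => Set.Icc (-(n:ℝ)) (n:ℝ))).indicator h x) = h x := by
        intro x
        apply le_antisymm
        · apply iSup_le
          intro n
          by_cases hx : x ∈ Set.univ.pi (fun _ : Fin d => Set.Icc (-(n:ℝ)) (n:ℝ))
          · rw [Set.indicator_of_mem hx]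
          · rw [Set.indicator_of_notMem hx]; exact zero_le
        · obtain ⟨n, hn⟩ := hcover x
          exact le_iSup_of_le n (by rw [Set.indicator_of_mem hn])
      calc ∫⁻ x, h x ∂volume
          = ∫⁻ x, ⨆ n : ℕ,
              (Set.univ.pi (fun _ : Fin d => Set.Icc (-(n:ℝ)) (n:ℝ))).indicator h x ∂volume :=
            (lintegral_congr fun x => (hiSup x).symm)
        _ = ⨆ n : ℕ, ∫⁻ x,
              (Set.univ.pi (fun _ : Fin d => Set.Icc (-(n:ℝ)) (n:ℝ))).indicator h x ∂volume :=
            lintegral_iSup (fun n => hmeasF.indicator (hboxmeas n)) hmono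
        _ = ⨆ n : ℕ, ∫⁻ x in Set.univ.pi (fun _ : Fin d => Set.Icc (-(n:ℝ)) (n:ℝ)),
              h x ∂volume := by
            refine iSup_congr fun n => ?_
            rw [lintegral_indicator (hboxmeas n)]
        _ ≤ ENNReal.ofReal (K * I ^ (p/2)) := iSup_le hbox
    -- conclude
    have hpne : ENNReal.ofReal p ≠ 0 := (ENNReal.ofReal_pos.mpr hp0).ne'
    rw [eLpNorm_eq_lintegral_rpow_enorm_toReal hpne ENNReal.ofReal_ne_top]
    rw [ENNReal.toReal_ofReal hp0.le]
    have heq : ∀ x : Fin d → ℝ, ((‖F x‖₊ : ℝ≥0∞)) ^ p = ENNReal.ofReal (‖F x‖ ^ p) := by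
      intro x
      rw [show ((‖F x‖₊ : ℝ≥0∞)) = ENNReal.ofReal ‖F x‖ from (ofReal_norm (F x)).symm, ENNReal.ofReal_rpow_of_nonneg (norm_nonneg _) hp0.le]
    calc (∫⁻ x, ((‖F x‖₊ : ℝ≥0∞)) ^ p ∂volume) ^ (1/p)
        = (∫⁻ x, ENNReal.ofReal (‖F x‖ ^ p) ∂volume) ^ (1/p) := by
          congr 1; exact lintegral_congr heq
      _ ≤ (ENNReal.ofReal (K * I ^ (p/2))) ^ (1/p) :=
          ENNReal.rpow_le_rpow htotal (by positivity)
      _ = ENNReal.ofReal ((K * I ^ (p/2)) ^ (1/p)) :=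
          ENNReal.ofReal_rpow_of_nonneg (by positivity) (by positivity)
      _ = ENNReal.ofReal (K ^ (1/p) * Real.sqrt I) := by
          congr 1
          rw [Real.mul_rpow hKpos.le (by positivity), Real.sqrt_eq_rpow]
          congr 1
          rw [← Real.rpow_mul hInn]
          congr 1
          field_simp
end
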